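/- Let λ > 0, τ ≥ 1, and α = (λ/2)(1 + 1/τ). There is no twice continuously differentiable function X : [0,∞) → ℝ satisfying all of the following: X(t) > 0 for all t ≥ 0; X'(t) ≥ 0 for all t ≥ 0; X''(t) - (λ²/4)(1 - 1/τ)² X(t) ≥ (λ²/τ) e^{-αt} X(t)² for all t ≥ 0; X'(0)² ≥ (2λ²/(3τ)) X(0)³; and X(0) > (3/2)τ. -/

import Mathlib

open Filter Real

private lemma sq_le_imp_le {a b : ℝ} (_ha : 0 ≤ a) (hb : 0 ≤ b) (h : a ^ 2 ≤ b ^ 2) :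
    a ≤ b := by nlinarith

set_option maxHeartbeats 1600000 in
/-- the ODE inequality core of Proposition 5.1: for `λ > 0`, `τ ≥ 1`
and `α = (λ/2)(1+1/τ)`, there is no `C²` function `X : [0,∞) → ℝ` (formalized as a `C²`
function on `ℝ` whose relevant properties hold on `[0,∞)`) which is positive,
nondecreasing, satisfies `X'' - (λ²/4)(1-1/τ)² X ≥ (λ²/τ) e^{-αt} X²` on `[0,∞)`,
together with `X'(0)² ≥ (2λ²/(3τ)) X(0)³` and `X(0) > (3/2)τ`. -/
theorem stmt_17 (lam τ : ℝ) (hlam : 0 < lam) (hτ : 1 ≤ τ) :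
    ¬ ∃ X : ℝ → ℝ, ContDiff ℝ 2 X ∧
      (∀ t : ℝ, 0 ≤ t → 0 < X t) ∧
      (∀ t : ℝ, 0 ≤ t → 0 ≤ deriv X t) ∧
      (∀ t : ℝ, 0 ≤ t →
        lam ^ 2 / τ * Real.exp (-(lam / 2 * (1 + 1 / τ)) * t) * X t ^ 2 ≤
          deriv (deriv X) t - lam ^ 2 / 4 * (1 - 1 / τ) ^ 2 * X t) ∧
      2 * lam ^ 2 / (3 * τ) * X 0 ^ 3 ≤ (deriv X 0) ^ 2 ∧
      3 / 2 * τ < X 0 := by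
  rintro ⟨X, hX, hpos, hmono, hODE, hE0, hX0⟩
  have hτ0 : (0 : ℝ) < τ := lt_of_lt_of_le one_pos hτ
  set α : ℝ := lam / 2 * (1 + 1 / τ) with hα
  have hα0 : 0 < α := by positivity
  set c : ℝ := 2 * lam ^ 2 / (3 * τ) with hc
  have hc0 : 0 < c := by positivity
  -- differentiability facts
  have hX1 : Differentiable ℝ X := hX.differentiable (by norm_num)
  have hX2 : Differentiable ℝ (deriv X) := by
    have h2 : ContDiff ℝ ((1 : WithTop ℕ∞) + 1) X := by exact_mod_cast hX
    exact ((contDiff_succ_iff_deriv.mp h2).2.2).differentiable (by norm_num)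
  -- the energy function
  set F : ℝ → ℝ := fun t => (deriv X t) ^ 2 - c * Real.exp (-α * t) * X t ^ 3 with hF
  have hFderiv : ∀ t : ℝ, HasDerivAt F
      (2 * deriv X t ^ 1 * deriv (deriv X) t -
        (c * (Real.exp (-α * t) * (-α)) * X t ^ 3 +
          c * Real.exp (-α * t) * (3 * X t ^ 2 * deriv X t))) t := by
    intro t
    have h1 : HasDerivAt X (deriv X t) t := (hX1 t).hasDerivAt
    have h2 : HasDerivAt (deriv X) (deriv (deriv X) t) t := (hX2 t).hasDerivAt
    have hexp : HasDerivAt (fun s : ℝ => Real.exp (-α * s)) (Real.exp (-α * t) * (-α)) t := by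
      simpa using ((hasDerivAt_id t).const_mul (-α)).exp
    have hcube : HasDerivAt (fun s : ℝ => X s ^ 3) (3 * X t ^ 2 * deriv X t) t := h1.pow 3
    exact (h2.pow 2).sub (((hexp.const_mul c).mul hcube))
  have hFmono : MonotoneOn F (Set.Ici (0 : ℝ)) := by
    apply monotoneOn_of_deriv_nonneg (convex_Ici 0)
    · exact (Continuous.continuousOn (by
        have : Continuous F := by
          apply Continuous.sub
          · exact (hX2.continuous.pow 2)
          · exact (continuous_const.mul ((continuous_const.mul continuous_id).rexp)).mul
              (hX1.continuous.pow 3)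
        exact this))
    · intro x _
      exact ((hFderiv x).differentiableAt).differentiableWithinAt
    · intro x hx
      rw [interior_Ici] at hx
      have hx0 : (0 : ℝ) ≤ x := le_of_lt hx
      rw [(hFderiv x).deriv]
      have hode := hODE x hx0
      have hmx := hmono x hx0
      have hpx := hpos x hx0
      have hexp0 : 0 < Real.exp (-α * x) := Real.exp_pos _
      -- 2 X' X'' ≥ 2 X' (λ²/τ e^{-αx} X² + β² X) ≥ 2 X' (λ²/τ) e^{-αx} X² and 3c = 2λ²/τ
      have hbb : lam ^ 2 / τ * Real.exp (-α * x) * X x ^ 2 +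
          lam ^ 2 / 4 * (1 - 1 / τ) ^ 2 * X x ≤ deriv (deriv X) x := by
        linarith [hODE x hx0]
      simp only [pow_one]
      have h7 : c * Real.exp (-α * x) * (3 * X x ^ 2 * deriv X x) =
          2 * deriv X x * (lam ^ 2 / τ * Real.exp (-α * x) * X x ^ 2) := by
        rw [hc]; field_simp
      have h6 := mul_le_mul_of_nonneg_left hbb (by linarith : (0:ℝ) ≤ 2 * deriv X x)
      have h8 : 0 ≤ c * (Real.exp (-α * x) * α) * X x ^ 3 := by positivity
      have h9 : 0 ≤ 2 * deriv X x * (lam ^ 2 / 4 * (1 - 1 / τ) ^ 2 * X x) := by positivity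
      nlinarith [h6, h7, h8, h9]
  have hF0 : 0 ≤ F 0 := by
    have : F 0 = (deriv X 0) ^ 2 - c * X 0 ^ 3 := by
      simp [hF]
    rw [this]
    linarith [hE0]
  have key : ∀ t : ℝ, 0 ≤ t → c * Real.exp (-α * t) * X t ^ 3 ≤ (deriv X t) ^ 2 := by
    intro t ht
    have := hFmono (Set.self_mem_Ici) (Set.mem_Ici.mpr ht) ht
    have hFt : F t = (deriv X t) ^ 2 - c * Real.exp (-α * t) * X t ^ 3 := rfl
    linarith [this, hF0]
  -- pointwise lower bound on X'
  have key' : ∀ t : ℝ, 0 ≤ t →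
      Real.sqrt c * Real.exp (-(α / 2) * t) * Real.sqrt (X t) ^ 3 ≤ deriv X t := by
    intro t ht
    apply sq_le_imp_le (by positivity) (hmono t ht)
    have hs : Real.sqrt (X t) ^ 2 = X t := Real.sq_sqrt (hpos t ht).le
    have hc2 : Real.sqrt c ^ 2 = c := Real.sq_sqrt hc0.le
    have he : Real.exp (-(α / 2) * t) ^ 2 = Real.exp (-α * t) := by
      rw [sq, ← Real.exp_add]
      congr 1
      ring
    calc (Real.sqrt c * Real.exp (-(α / 2) * t) * Real.sqrt (X t) ^ 3) ^ 2
        = Real.sqrt c ^ 2 * Real.exp (-(α / 2) * t) ^ 2 * (Real.sqrt (X t) ^ 2) ^ 3 := by ring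
      _ = c * Real.exp (-α * t) * X t ^ 3 := by rw [hs, hc2, he]
      _ ≤ (deriv X t) ^ 2 := key t ht
  -- the auxiliary decreasing function
  set H : ℝ → ℝ := fun t => (Real.sqrt (X t))⁻¹ - Real.sqrt c / α * Real.exp (-(α / 2) * t)
    with hH
  have hHanti : AntitoneOn H (Set.Ici (0 : ℝ)) := by
    apply antitoneOn_of_deriv_nonpos (convex_Ici 0)
    · apply ContinuousOn.sub
      · exact ((Real.continuous_sqrt.comp hX1.continuous).continuousOn).inv₀
          (fun t ht => ne_of_gt (Real.sqrt_pos.mpr (hpos t ht)))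
      · exact (continuous_const.mul ((continuous_const.mul continuous_id).rexp)).continuousOn
    · rw [interior_Ici]
      intro t ht
      have hXt : 0 < X t := hpos t ht.le
      have hst : 0 < Real.sqrt (X t) := Real.sqrt_pos.mpr hXt
      have hsX : HasDerivAt (fun s => Real.sqrt (X s)) (deriv X t / (2 * Real.sqrt (X t))) t := by
        have := (Real.hasDerivAt_sqrt (ne_of_gt hXt)).comp t (hX1 t).hasDerivAt
        exact this.congr_deriv (by ring)
      have hinv : HasDerivAt (fun s => (Real.sqrt (X s))⁻¹)
          (-(deriv X t / (2 * Real.sqrt (X t))) / (Real.sqrt (X t)) ^ 2) t :=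
        hsX.inv (ne_of_gt hst)
      have hexp : HasDerivAt (fun s : ℝ => Real.exp (-(α / 2) * s))
          (Real.exp (-(α / 2) * t) * (-(α / 2))) t := by
        simpa using ((hasDerivAt_id t).const_mul (-(α / 2))).exp
      exact (hinv.sub (hexp.const_mul (Real.sqrt c / α))).differentiableAt.differentiableWithinAt
    · rw [interior_Ici]
      intro t ht
      have hXt : 0 < X t := hpos t ht.le
      have hst : 0 < Real.sqrt (X t) := Real.sqrt_pos.mpr hXt
      have hsX : HasDerivAt (fun s => Real.sqrt (X s)) (deriv X t / (2 * Real.sqrt (X t))) t := by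
        have := (Real.hasDerivAt_sqrt (ne_of_gt hXt)).comp t (hX1 t).hasDerivAt
        exact this.congr_deriv (by ring)
      have hinv : HasDerivAt (fun s => (Real.sqrt (X s))⁻¹)
          (-(deriv X t / (2 * Real.sqrt (X t))) / (Real.sqrt (X t)) ^ 2) t :=
        hsX.inv (ne_of_gt hst)
      have hexp : HasDerivAt (fun s : ℝ => Real.exp (-(α / 2) * s))
          (Real.exp (-(α / 2) * t) * (-(α / 2))) t := by
        simpa using ((hasDerivAt_id t).const_mul (-(α / 2))).exp
      have hDH : HasDerivAt H
          (-(deriv X t / (2 * Real.sqrt (X t))) / (Real.sqrt (X t)) ^ 2 -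
            Real.sqrt c / α * (Real.exp (-(α / 2) * t) * (-(α / 2)))) t :=
        hinv.sub (hexp.const_mul (Real.sqrt c / α))
      rw [hDH.deriv]
      have hk := key' t ht.le
      have hsc : 0 ≤ Real.sqrt c := Real.sqrt_nonneg c
      have hαne : α ≠ 0 := ne_of_gt hα0
      have hstne : Real.sqrt (X t) ≠ 0 := ne_of_gt hst
      have hexp0 : 0 < Real.exp (-(α / 2) * t) := Real.exp_pos _
      have he1 : Real.sqrt c / α * (Real.exp (-(α / 2) * t) * (-(α / 2))) =
          -(Real.sqrt c * Real.exp (-(α / 2) * t) / 2) := by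
        field_simp
      have he2 : -(deriv X t / (2 * Real.sqrt (X t))) / (Real.sqrt (X t)) ^ 2 =
          -(deriv X t / (2 * Real.sqrt (X t) ^ 3)) := by
        rw [neg_div, div_div]
        ring_nf
      rw [he1, he2]
      have hfin : Real.sqrt c * Real.exp (-(α / 2) * t) / 2 ≤
          deriv X t / (2 * Real.sqrt (X t) ^ 3) := by
        rw [div_le_div_iff₀ (by norm_num) (by positivity)]
        nlinarith [hk, pow_pos hst 3]
      linarith [hfin]
  -- H 0 < 0 strictly
  have hs0 : 0 < Real.sqrt (X 0) := Real.sqrt_pos.mpr (hpos 0 le_rfl)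
  have hδ : (Real.sqrt (X 0))⁻¹ < Real.sqrt c / α := by
    rw [inv_eq_one_div, div_lt_div_iff₀ hs0 hα0]
    have hcx : α ^ 2 < c * X 0 := by
      have h1 : c * X 0 > c * (3 / 2 * τ) := by
        exact mul_lt_mul_of_pos_left hX0 hc0
      have h2 : c * (3 / 2 * τ) = lam ^ 2 := by
        rw [hc]; field_simp
      have h3 : α ^ 2 ≤ lam ^ 2 := by
        rw [hα]
        have h4 : 1 + 1 / τ ≤ 2 := by
          have : 1 / τ ≤ 1 := by
            rw [div_le_one hτ0]; exact hτ
          linarith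
        have h5 : 0 < 1 + 1 / τ := by positivity
        have h6 : 0 ≤ (2 - (1 + 1 / τ)) * (2 + (1 + 1 / τ)) :=
          mul_nonneg (by linarith) (by linarith)
        nlinarith [h6, sq_nonneg lam]
      -- need strict: lam^2 = c * (3/2 τ) < c * X0
      linarith
    have : α < Real.sqrt c * Real.sqrt (X 0) := by
      have := Real.sqrt_lt_sqrt (by positivity) hcx
      rwa [Real.sqrt_sq hα0.le, Real.sqrt_mul hc0.le] at this
    linarith
  set δ : ℝ := Real.sqrt c / α - (Real.sqrt (X 0))⁻¹ with hδdef
  have hδ0 : 0 < δ := by rw [hδdef]; linarith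
  -- choose t large
  have htend : Tendsto (fun t : ℝ => Real.sqrt c / α * Real.exp (-(α / 2) * t)) atTop (nhds 0) := by
    have h1 : Tendsto (fun t : ℝ => (α / 2) * t) atTop atTop :=
      Tendsto.const_mul_atTop (by positivity) tendsto_id
    have h2 : Tendsto (fun t : ℝ => Real.exp (-(α / 2 * t))) atTop (nhds 0) :=
      Real.tendsto_exp_neg_atTop_nhds_zero.comp h1
    have h3 : Tendsto (fun t : ℝ => Real.sqrt c / α * Real.exp (-(α / 2 * t))) atTop (nhds 0) := by
      simpa using h2.const_mul (Real.sqrt c / α)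
    convert h3 using 2 with t
    ring_nf
  have hev : ∀ᶠ t : ℝ in atTop, Real.sqrt c / α * Real.exp (-(α / 2) * t) < δ :=
    htend.eventually (gt_mem_nhds hδ0)
  obtain ⟨t, htlt, ht0⟩ := (hev.and (eventually_ge_atTop (0 : ℝ))).exists
  have hHt : H t ≤ H 0 := hHanti Set.self_mem_Ici (Set.mem_Ici.mpr ht0) ht0
  have hH0 : H 0 = -δ := by
    have h1 : Real.exp (-(α / 2) * 0) = 1 := by norm_num
    simp only [hH, h1, mul_one, hδdef]
    ring
  have hpos' : 0 < (Real.sqrt (X t))⁻¹ := by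
    have := Real.sqrt_pos.mpr (hpos t ht0)
    positivity
  have hHtdef : H t = (Real.sqrt (X t))⁻¹ - Real.sqrt c / α * Real.exp (-(α / 2) * t) := rfl
  rw [hHtdef, hH0] at hHt
  linarith [hHt, htlt, hpos']
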